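/- Let S(t) be a C₀-semigroup on X₂ with generator A₂, b₂ ∈ X₂, c ∈ D(A₂*), and suppose (c, b₂) ≠ 0. Then for every t₁ > 0 and every w ∈ H¹([0,t₁]; ℂ) with w(0) = 0, there exists u ∈ L²([0,t₁]) such that w(t) = ∫_0^t (c, S(t-τ) b₂) u(τ) dτ for all t ∈ [0, t₁]. -/

import Mathlib

open MeasureTheory Set intervalIntegral Filter
open scoped BoundedContinuousFunction

/-- multiplying an integrable function by a bounded measurable shifted kernel is integrable -/
private lemma mul_shift_int {g : ℝ → ℂ} (hg : Measurable g) {M : ℝ}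
    (hgb : ∀ x, ‖g x‖ ≤ M) {q : ℝ → ℂ} (hq : Integrable q volume) (t : ℝ) :
    Integrable (fun τ => q τ * g (t - τ)) volume := by
  have hm : AEStronglyMeasurable (fun τ => g (t - τ)) volume :=
    (hg.comp (measurable_const.sub measurable_id)).aestronglyMeasurable
  simpa [mul_comm] using hq.bdd_mul hm (c := M) (Filter.Eventually.of_forall fun τ => hgb _)

/-- continuity of the convolution of an integrable function with a bounded measurable kernel -/
private lemma conv_cont {g : ℝ → ℂ} (hg : Measurable g) {M : ℝ}
    (hgb : ∀ x, ‖g x‖ ≤ M) {q : ℝ → ℂ} (hq : Integrable q volume) :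
    Continuous (fun t => ∫ τ, q τ * g (t - τ)) := by
  have hM0 : 0 ≤ M := le_trans (norm_nonneg _) (hgb 0)
  apply continuous_of_uniform_approx_of_continuous
  intro U hU
  rcases Metric.mem_uniformity_dist.mp hU with ⟨ε, hε, hball⟩
  obtain ⟨φ, hφsupp, hφapprox, hφcont, hφint⟩ :=
    hq.exists_hasCompactSupport_integral_sub_le (ε := ε / (2 * (M + 1))) (by positivity)
  refine ⟨fun t => ∫ τ, φ τ * g (t - τ), ?_, ?_⟩
  · have hgl : LocallyIntegrable g volume :=
      (memLp_top_of_bound hg.aestronglyMeasurable M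
        (Filter.Eventually.of_forall hgb)).locallyIntegrable le_top
    have hconv := HasCompactSupport.continuous_convolution_left
      (L := ContinuousLinearMap.mul ℂ ℂ) hφsupp hφcont hgl
    have heq : (fun t => ∫ τ, φ τ * g (t - τ)) =
        convolution φ g (ContinuousLinearMap.mul ℂ ℂ) volume := by
      funext t
      simp [convolution, ContinuousLinearMap.mul_apply']
    rw [heq]
    exact hconv
  · intro t
    apply hball
    rw [dist_eq_norm, ← integral_sub (mul_shift_int hg hgb hq t) (mul_shift_int hg hgb hφint t)]
    have hpt : ∀ τ, ‖q τ * g (t - τ) - φ τ * g (t - τ)‖ ≤ ‖q τ - φ τ‖ * M := by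
      intro τ
      rw [← sub_mul, norm_mul]
      exact mul_le_mul_of_nonneg_left (hgb _) (norm_nonneg _)
    have h1 : ‖∫ τ, (q τ * g (t - τ) - φ τ * g (t - τ))‖ ≤ ∫ τ, ‖q τ - φ τ‖ * M :=
      norm_integral_le_of_norm_le ((hq.sub hφint).norm.mul_const M)
        (Filter.Eventually.of_forall hpt)
    have h2 : (∫ τ, ‖q τ - φ τ‖ * M) = (∫ τ, ‖q τ - φ τ‖) * M := integral_mul_const _ _
    have h3 : (∫ τ, ‖q τ - φ τ‖) * M ≤ ε / (2 * (M + 1)) * M :=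
      mul_le_mul_of_nonneg_right hφapprox hM0
    have h4 : ε / (2 * (M + 1)) * M < ε := by
      rw [div_mul_eq_mul_div, div_lt_iff₀ (by positivity)]
      nlinarith
    calc ‖∫ τ, (q τ * g (t - τ) - φ τ * g (t - τ))‖ ≤ ∫ τ, ‖q τ - φ τ‖ * M := h1
      _ = (∫ τ, ‖q τ - φ τ‖) * M := h2
      _ ≤ ε / (2 * (M + 1)) * M := h3
      _ < ε := h4


/-- solving the second-kind Volterra equation by iteration in bounded continuous functions -/
private lemma volterra_fixed (t₁ : ℝ) (ht₁ : 0 < t₁) (g : ℝ → ℂ) (hg : Measurable g) (M : ℝ)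
    (hgb : ∀ x, ‖g x‖ ≤ M) (hgsupp : ∀ x : ℝ, x < 0 → g x = 0)
    (h₀ : ℝ → ℂ) (hh₀ : Integrable h₀ volume) :
    ∃ v : ℝ → ℂ, Continuous v ∧ (∃ B : ℝ, ∀ t, ‖v t‖ ≤ B) ∧
      ∀ t : ℝ, v t = -∫ τ, (h₀ τ + (Set.Icc 0 t₁).indicator v τ) * g (t - τ) := by
  have hM0 : 0 ≤ M := le_trans (norm_nonneg _) (hgb 0)
  -- the indicator of a bounded continuous function is integrable
  have hind : ∀ v : ℝ →ᵇ ℂ, Integrable ((Set.Icc (0:ℝ) t₁).indicator ⇑v) volume := by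
    intro v
    exact (v.continuous.integrableOn_Icc).integrable_indicator measurableSet_Icc
  have hq : ∀ v : ℝ →ᵇ ℂ, Integrable (fun τ => h₀ τ + (Set.Icc (0:ℝ) t₁).indicator ⇑v τ) volume :=
    fun v => hh₀.add (hind v)
  have hcont : ∀ v : ℝ →ᵇ ℂ,
      Continuous (fun t => -∫ τ, (h₀ τ + (Set.Icc (0:ℝ) t₁).indicator ⇑v τ) * g (t - τ)) :=
    fun v => (conv_cont hg hgb (hq v)).neg
  have hbdd : ∀ (v : ℝ →ᵇ ℂ) (t : ℝ),
      ‖-∫ τ, (h₀ τ + (Set.Icc (0:ℝ) t₁).indicator ⇑v τ) * g (t - τ)‖ ≤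
        (∫ τ, ‖h₀ τ + (Set.Icc (0:ℝ) t₁).indicator ⇑v τ‖) * M := by
    intro v t
    rw [norm_neg]
    have h1 : ‖∫ τ, (h₀ τ + (Set.Icc (0:ℝ) t₁).indicator ⇑v τ) * g (t - τ)‖ ≤
        ∫ τ, ‖h₀ τ + (Set.Icc (0:ℝ) t₁).indicator ⇑v τ‖ * M := by
      apply MeasureTheory.norm_integral_le_of_norm_le ((hq v).norm.mul_const M)
      apply Filter.Eventually.of_forall
      intro τ
      rw [norm_mul]
      exact mul_le_mul_of_nonneg_left (hgb _) (norm_nonneg _)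
    simpa [MeasureTheory.integral_mul_const] using h1
  let T : (ℝ →ᵇ ℂ) → (ℝ →ᵇ ℂ) := fun v =>
    BoundedContinuousFunction.ofNormedAddCommGroup _ (hcont v) _ (hbdd v)
  have hTapp : ∀ (v : ℝ →ᵇ ℂ) (t : ℝ),
      T v t = -∫ τ, (h₀ τ + (Set.Icc (0:ℝ) t₁).indicator ⇑v τ) * g (t - τ) := fun v t => rfl
  -- the key iterate estimate
  set φ : ℝ → ℝ := fun t => min (max t 0) t₁ with hφdef
  have hφ0 : ∀ t, 0 ≤ φ t := fun t => le_min (le_max_right _ _) ht₁.le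
  have hφt₁ : ∀ t, φ t ≤ t₁ := fun t => min_le_right _ _
  have claim : ∀ (v v' : ℝ →ᵇ ℂ) (n : ℕ) (t : ℝ),
      ‖(T^[n] v) t - (T^[n] v') t‖ ≤ M ^ n * φ t ^ n / n.factorial * dist v v' := by
    intro v v'
    intro n
    induction n with
    | zero =>
      intro t
      simpa [← dist_eq_norm] using v.dist_coe_le_dist (g := v') t
    | succ n IH =>
      intro t
      rw [Function.iterate_succ_apply', Function.iterate_succ_apply']
      set a := T^[n] v with ha
      set b := T^[n] v' with hb
      have hdiff : T a t - T b t =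
          ∫ τ, ((Set.Icc (0:ℝ) t₁).indicator ⇑b τ - (Set.Icc (0:ℝ) t₁).indicator ⇑a τ) * g (t - τ) := by
        rw [hTapp, hTapp, neg_sub_neg, ← integral_sub (mul_shift_int hg hgb (hq b) t)
          (mul_shift_int hg hgb (hq a) t)]
        congr 1
        funext τ
        ring
      rw [hdiff]
      set D := dist v v' with hD
      have hD0 : 0 ≤ D := dist_nonneg
      set ψ : ℝ → ℝ := (Set.Icc (0:ℝ) (φ t)).indicator
        (fun τ => M ^ (n + 1) * τ ^ n / n.factorial * D) with hψdef
      have hψint : Integrable ψ volume := by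
        apply IntegrableOn.integrable_indicator _ measurableSet_Icc
        apply Continuous.integrableOn_Icc
        exact ((continuous_const.mul (continuous_pow n)).div_const _).mul continuous_const
      have hptw : ∀ τ, ‖((Set.Icc (0:ℝ) t₁).indicator ⇑b τ -
          (Set.Icc (0:ℝ) t₁).indicator ⇑a τ) * g (t - τ)‖ ≤ ψ τ := by
        intro τ
        by_cases hτ : τ ∈ Set.Icc (0:ℝ) (φ t)
        · have hτI : τ ∈ Set.Icc (0:ℝ) t₁ := ⟨hτ.1, le_trans hτ.2 (hφt₁ t)⟩
          have hφτ : φ τ = τ := by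
            show min (max τ 0) t₁ = τ
            rw [max_eq_left hτ.1, min_eq_left hτI.2]
          rw [Set.indicator_of_mem hτI, Set.indicator_of_mem hτI, hψdef,
            Set.indicator_of_mem hτ, norm_mul]
          have h1 : ‖b τ - a τ‖ ≤ M ^ n * τ ^ n / n.factorial * D := by
            have h2 := IH τ
            rw [hφτ] at h2
            rwa [norm_sub_rev]
          calc ‖b τ - a τ‖ * ‖g (t - τ)‖ ≤ (M ^ n * τ ^ n / n.factorial * D) * M := by
                apply mul_le_mul h1 (hgb _) (norm_nonneg _)
                exact mul_nonneg (div_nonneg (mul_nonneg (pow_nonneg hM0 n)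
                  (pow_nonneg hτ.1 n)) (Nat.cast_nonneg _)) hD0
            _ = M ^ (n + 1) * τ ^ n / n.factorial * D := by ring
        · have hψ0 : ψ τ = 0 := Set.indicator_of_notMem hτ _
          rw [hψ0]
          rw [Set.mem_Icc, not_and_or, not_le, not_le] at hτ
          rcases hτ with h | h
          · have hτI : τ ∉ Set.Icc (0:ℝ) t₁ := by
              rw [Set.mem_Icc]; push_neg; intro h0; linarith
            simp [Set.indicator_of_notMem hτI]
          · by_cases hτt₁ : τ ≤ t₁
            · have htτ : t < τ := by
                have h1 : max t 0 ≤ t₁ := by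
                  rcases le_or_gt (max t 0) t₁ with h' | h'
                  · exact h'
                  · exfalso
                    have hmin : φ t = t₁ := min_eq_right h'.le
                    linarith
                have h2 : φ t = max t 0 := min_eq_left h1
                have h3 : t ≤ φ t := h2 ▸ le_max_left t 0
                linarith
              have hg0 : g (t - τ) = 0 := hgsupp _ (by linarith)
              simp [hg0]
            · have hτI : τ ∉ Set.Icc (0:ℝ) t₁ := by
                rw [Set.mem_Icc]; push_neg; intro _
                exact not_le.mp hτt₁
              simp [Set.indicator_of_notMem hτI]
      have hnorm : ‖∫ τ, ((Set.Icc (0:ℝ) t₁).indicator ⇑b τ -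
          (Set.Icc (0:ℝ) t₁).indicator ⇑a τ) * g (t - τ)‖ ≤ ∫ τ, ψ τ :=
        norm_integral_le_of_norm_le hψint (Filter.Eventually.of_forall hptw)
      have hψval : (∫ τ, ψ τ) = M ^ (n + 1) * φ t ^ (n + 1) / (n + 1).factorial * D := by
        rw [hψdef, MeasureTheory.integral_indicator measurableSet_Icc,
          MeasureTheory.integral_Icc_eq_integral_Ioc, ← intervalIntegral.integral_of_le (hφ0 t)]
        have hfun : (fun τ : ℝ => M ^ (n + 1) * τ ^ n / n.factorial * D) =
            fun τ : ℝ => (M ^ (n + 1) / n.factorial * D) * τ ^ n := by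
          funext τ; ring
        rw [hfun, intervalIntegral.integral_const_mul, integral_pow]
        have hfac : ((n + 1).factorial : ℝ) = (n + 1) * n.factorial := by
          rw [Nat.factorial_succ]; push_cast; ring
        have hnfac : (n.factorial : ℝ) ≠ 0 := Nat.cast_ne_zero.mpr n.factorial_ne_zero
        have hn1 : ((n : ℝ) + 1) ≠ 0 := by positivity
        rw [hfac]
        field_simp
        ring
      rw [hψval] at hnorm
      exact hnorm
  -- choose an iterate that is a contraction
  have htend : Tendsto (fun n : ℕ => (M * t₁) ^ n / n.factorial) atTop (nhds 0) :=
    FloorSemiring.tendsto_pow_div_factorial_atTop (M * t₁)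
  obtain ⟨N, hN⟩ : ∃ n : ℕ, (M * t₁) ^ n / n.factorial < 1 :=
    ((htend.eventually (gt_mem_nhds one_pos)).exists)
  have hKnn : 0 ≤ (M * t₁) ^ N / N.factorial := by positivity
  set K : NNReal := Real.toNNReal ((M * t₁) ^ N / N.factorial) with hK
  have hK1 : K < 1 := by
    rw [← NNReal.coe_lt_coe, hK, Real.coe_toNNReal _ hKnn, NNReal.coe_one]
    exact hN
  have hlip : LipschitzWith K (T^[N]) := by
    apply LipschitzWith.of_dist_le_mul
    intro v v'
    have hcoe : (K : ℝ) = (M * t₁) ^ N / N.factorial := Real.coe_toNNReal _ hKnn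
    rw [hcoe]
    apply (BoundedContinuousFunction.dist_le (by positivity)).mpr
    intro t
    rw [dist_eq_norm]
    calc ‖(T^[N] v) t - (T^[N] v') t‖ ≤ M ^ N * φ t ^ N / N.factorial * dist v v' :=
        claim v v' N t
      _ ≤ (M * t₁) ^ N / N.factorial * dist v v' := by
        rw [mul_pow]
        have h5 : φ t ^ N ≤ t₁ ^ N := pow_le_pow_left₀ (hφ0 t) (hφt₁ t) N
        have h6 : M ^ N * φ t ^ N ≤ M ^ N * t₁ ^ N :=
          mul_le_mul_of_nonneg_left h5 (pow_nonneg hM0 N)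
        apply mul_le_mul_of_nonneg_right _ dist_nonneg
        exact (div_le_div_iff_of_pos_right (by positivity)).mpr h6
  have hC : ContractingWith K (T^[N]) := ⟨hK1, hlip⟩
  have hfix : Function.IsFixedPt (T^[N]) (hC.fixedPoint (T^[N])) := hC.fixedPoint_isFixedPt
  set v₀ := hC.fixedPoint (T^[N]) with hv₀
  have hTfix : T v₀ = v₀ := by
    have h1 : Function.IsFixedPt (T^[N]) (T v₀) := by
      show T^[N] (T v₀) = T v₀
      rw [← Function.iterate_succ_apply, Function.iterate_succ_apply', hfix]
    exact (hC.fixedPoint_unique h1).trans (hC.fixedPoint_unique hfix).symm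
  refine ⟨⇑v₀, v₀.continuous, ⟨‖v₀‖, fun t => v₀.norm_coe_le_norm t⟩, fun t => ?_⟩
  conv_lhs => rw [← hTfix]
  exact hTapp v₀ t


/-- the Fubini/FTC step: iterated Volterra integral of `k'` recovers `k`. -/
private lemma fubini_step (k k' : ℝ → ℂ) (hk : ∀ s, HasDerivAt k (k' s) s)
    (hk'meas : Measurable k') (t₁ M₂ : ℝ) (hM₂ : ∀ s ∈ Set.Icc (0:ℝ) t₁, ‖k' s‖ ≤ M₂)
    (u : ℝ → ℂ) (hu : IntegrableOn u (Set.Ioc 0 t₁) volume)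
    (t : ℝ) (ht0 : 0 ≤ t) (ht1 : t ≤ t₁) :
    ∫ s in (0:ℝ)..t, (∫ τ in (0:ℝ)..s, k' (s - τ) * u τ) =
      ∫ τ in (0:ℝ)..t, (k (t - τ) - k 0) * u τ := by
  have h0t₁ : (0:ℝ) ≤ t₁ := le_trans ht0 ht1
  have hM₂0 : 0 ≤ M₂ := le_trans (norm_nonneg _) (hM₂ 0 ⟨le_refl 0, h0t₁⟩)
  set ut : ℝ → ℂ := (Set.Ioc (0:ℝ) t₁).indicator u with hut
  have hut_int : Integrable ut volume := hu.integrable_indicator measurableSet_Ioc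
  set A : Set (ℝ × ℝ) := {p : ℝ × ℝ | p.1 ∈ Set.Ioc (0:ℝ) t ∧ p.2 ∈ Set.Ioc (0:ℝ) p.1} with hA
  have mA : MeasurableSet A := by
    have : A = ({p : ℝ × ℝ | 0 < p.1} ∩ {p : ℝ × ℝ | p.1 ≤ t}) ∩
        ({p : ℝ × ℝ | 0 < p.2} ∩ {p : ℝ × ℝ | p.2 ≤ p.1}) := by
      ext p; simp [hA, Set.mem_Ioc, and_assoc]
    rw [this]
    exact (((measurableSet_lt measurable_const measurable_fst).inter
      (measurableSet_le measurable_fst measurable_const)).inter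
      ((measurableSet_lt measurable_const measurable_snd).inter
      (measurableSet_le measurable_snd measurable_fst)))
  set F : ℝ × ℝ → ℂ := fun p => k' (p.1 - p.2) * ut p.2 with hF
  have hF_aesm : AEStronglyMeasurable F (volume.prod volume) := by
    apply AEStronglyMeasurable.mul
    · exact (hk'meas.comp (measurable_fst.sub measurable_snd)).aestronglyMeasurable
    · exact hut_int.1.comp_quasiMeasurePreserving Measure.quasiMeasurePreserving_snd
  have hH_aesm : AEStronglyMeasurable (A.indicator F) (volume.prod volume) :=
    hF_aesm.indicator mA
  -- integrability of the double integrand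
  set bnd : ℝ × ℝ → ℝ := fun p =>
    ((Set.Ioc (0:ℝ) t).indicator (fun _ => (1:ℝ)) p.1) * (M₂ * ‖ut p.2‖) with hbnd
  have hbnd_int : Integrable bnd (volume.prod volume) := by
    have h1 : Integrable ((Set.Ioc (0:ℝ) t).indicator (fun _ => (1:ℝ))) volume := by
      rw [integrable_indicator_iff measurableSet_Ioc]
      exact integrableOn_const measure_Ioc_lt_top.ne
    have h2 : Integrable (fun τ => M₂ * ‖ut τ‖) volume := hut_int.norm.const_mul M₂
    exact MeasureTheory.Integrable.mul_prod h1 h2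
  have hptb : ∀ p : ℝ × ℝ, ‖A.indicator F p‖ ≤ bnd p := by
    intro p
    by_cases hp : p ∈ A
    · rw [Set.indicator_of_mem hp]
      have hp1 : p.1 ∈ Set.Ioc (0:ℝ) t := hp.1
      have hp2 : p.2 ∈ Set.Ioc (0:ℝ) p.1 := hp.2
      have hsub : p.1 - p.2 ∈ Set.Icc (0:ℝ) t₁ :=
        ⟨by linarith [hp2.2], by linarith [hp1.2, hp2.1]⟩
      show ‖k' (p.1 - p.2) * ut p.2‖ ≤
        (Set.Ioc (0:ℝ) t).indicator (fun _ => (1:ℝ)) p.1 * (M₂ * ‖ut p.2‖)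
      rw [Set.indicator_of_mem hp1, one_mul, norm_mul]
      exact mul_le_mul_of_nonneg_right (hM₂ _ hsub) (norm_nonneg _)
    · rw [Set.indicator_of_notMem hp, norm_zero]
      show (0:ℝ) ≤ (Set.Ioc (0:ℝ) t).indicator (fun _ => (1:ℝ)) p.1 * (M₂ * ‖ut p.2‖)
      exact mul_nonneg (Set.indicator_nonneg (fun _ _ => zero_le_one) _)
        (mul_nonneg hM₂0 (norm_nonneg _))
  have hH_int : Integrable (Function.uncurry fun s τ => A.indicator F (s, τ))
      (volume.prod volume) := by
    have : (Function.uncurry fun s τ => A.indicator F (s, τ)) = A.indicator F := rfl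
    rw [this]
    exact Integrable.mono' hbnd_int hH_aesm (Filter.Eventually.of_forall hptb)
  -- step 1 : left side as a double integral
  have step1 : (∫ s in (0:ℝ)..t, (∫ τ in (0:ℝ)..s, k' (s - τ) * u τ)) =
      ∫ s, (∫ τ, A.indicator F (s, τ)) := by
    rw [intervalIntegral.integral_of_le ht0, ← MeasureTheory.integral_indicator measurableSet_Ioc]
    congr 1
    funext s
    by_cases hs : s ∈ Set.Ioc (0:ℝ) t
    · rw [Set.indicator_of_mem hs]
      have hfun : (fun τ => A.indicator F (s, τ)) =
          (Set.Ioc (0:ℝ) s).indicator (fun τ => k' (s - τ) * ut τ) := by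
        funext τ
        by_cases hτ : τ ∈ Set.Ioc (0:ℝ) s
        · rw [Set.indicator_of_mem hτ, Set.indicator_of_mem (by exact ⟨hs, hτ⟩ : (s, τ) ∈ A)]
        · rw [Set.indicator_of_notMem hτ, Set.indicator_of_notMem
            (by intro hc; exact hτ hc.2)]
      rw [hfun, MeasureTheory.integral_indicator measurableSet_Ioc,
        intervalIntegral.integral_of_le hs.1.le]
      apply MeasureTheory.setIntegral_congr_fun measurableSet_Ioc
      intro τ hτ
      have hτ0 : τ ∈ Set.Ioc (0:ℝ) t₁ := ⟨hτ.1, le_trans hτ.2 (le_trans hs.2 ht1)⟩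
      show k' (s - τ) * u τ = k' (s - τ) * ut τ
      rw [hut, Set.indicator_of_mem hτ0]
    · rw [Set.indicator_of_notMem hs]
      have : ∀ τ, A.indicator F (s, τ) = 0 := by
        intro τ
        apply Set.indicator_of_notMem
        intro hc
        exact hs hc.1
      simp [this]
  -- step 2 : swap
  have step2 : (∫ s, (∫ τ, A.indicator F (s, τ))) = ∫ τ, (∫ s, A.indicator F (s, τ)) :=
    MeasureTheory.integral_integral_swap hH_int
  -- step 3 : inner integral via FTC
  have step3 : ∀ τ, (∫ s, A.indicator F (s, τ)) =
      (Set.Ioc (0:ℝ) t).indicator (fun τ => (k (t - τ) - k 0) * ut τ) τ := by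
    intro τ
    by_cases hτ : τ ∈ Set.Ioc (0:ℝ) t
    · have hfun : (fun s => A.indicator F (s, τ)) =
          (Set.Icc τ t).indicator (fun s => k' (s - τ) * ut τ) := by
        funext s
        by_cases hsA : (s, τ) ∈ A
        · have hs' : s ∈ Set.Icc τ t := ⟨hsA.2.2, hsA.1.2⟩
          rw [Set.indicator_of_mem hsA, Set.indicator_of_mem hs']
        · have hs' : s ∉ Set.Icc τ t := by
            intro hc
            exact hsA ⟨⟨lt_of_lt_of_le hτ.1 hc.1, hc.2⟩, ⟨hτ.1, hc.1⟩⟩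
          rw [Set.indicator_of_notMem hsA, Set.indicator_of_notMem hs']
      rw [hfun, MeasureTheory.integral_indicator measurableSet_Icc, Set.indicator_of_mem hτ]
      have hconst : ∫ s in Set.Icc τ t, k' (s - τ) * ut τ =
          (∫ s in Set.Icc τ t, k' (s - τ)) * ut τ := integral_mul_const _ _
      rw [hconst]
      congr 1
      rw [MeasureTheory.integral_Icc_eq_integral_Ioc, ← intervalIntegral.integral_of_le hτ.2,
        intervalIntegral.integral_comp_sub_right k' τ, sub_self]
      have hk'II : IntervalIntegrable k' volume 0 (t - τ) := by
        apply IntervalIntegrable.mono_fun (_root_.intervalIntegrable_const (c := M₂))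
          hk'meas.aestronglyMeasurable
        rw [Set.uIoc_of_le (by linarith [hτ.2] : (0:ℝ) ≤ t - τ)]
        apply (ae_restrict_mem measurableSet_Ioc).mono
        intro x hx
        have hxI : x ∈ Set.Icc (0:ℝ) t₁ := ⟨hx.1.le, by linarith [hx.2, hτ.1]⟩
        calc ‖k' x‖ ≤ M₂ := hM₂ _ hxI
          _ = ‖M₂‖ := (Real.norm_of_nonneg hM₂0).symm
      exact intervalIntegral.integral_eq_sub_of_hasDerivAt (fun x _ => hk x) hk'II
    · rw [Set.indicator_of_notMem hτ]
      have : ∀ s, A.indicator F (s, τ) = 0 := by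
        intro s
        apply Set.indicator_of_notMem
        intro hc
        exact hτ ⟨hc.2.1, le_trans hc.2.2 hc.1.2⟩
      simp [this]
  -- step 4 : conclude
  rw [step1, step2]
  have : (fun τ => ∫ s, A.indicator F (s, τ)) =
      (Set.Ioc (0:ℝ) t).indicator (fun τ => (k (t - τ) - k 0) * ut τ) := funext step3
  rw [this, MeasureTheory.integral_indicator measurableSet_Ioc,
    intervalIntegral.integral_of_le ht0]
  apply MeasureTheory.setIntegral_congr_fun measurableSet_Ioc
  intro τ hτ
  have hτ0 : τ ∈ Set.Ioc (0:ℝ) t₁ := ⟨hτ.1, le_trans hτ.2 ht1⟩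
  show (k (t - τ) - k 0) * ut τ = (k (t - τ) - k 0) * u τ
  rw [hut, Set.indicator_of_mem hτ0]

/-- Exact solvability of the first-kind Volterra equation w(t) = ∫₀ᵗ ⟨c, S(t-τ)b₂⟩ u(τ) dτ
with a square integrable control u, for any w ∈ H¹ with w(0) = 0, provided c ∈ D(A₂*)
(encoded via cstar = A₂*c and differentiability of the adjoint orbit) and ⟨c,b₂⟩ ≠ 0. -/
theorem stmt_18 {X₂ : Type*} [NormedAddCommGroup X₂] [InnerProductSpace ℂ X₂]
    [CompleteSpace X₂]
    (S : ℝ → (X₂ →L[ℂ] X₂)) (hS0 : S 0 = 1)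
    (hSsg : ∀ s t : ℝ, 0 ≤ s → 0 ≤ t → S (s + t) = S s ∘L S t)
    (hScont : ∀ x : X₂, ContinuousOn (fun t => S t x) (Set.Ici 0))
    (b₂ c cstar : X₂)
    (hc : ∀ s : ℝ, HasDerivAt (fun u : ℝ => (ContinuousLinearMap.adjoint (S u)) c)
      ((ContinuousLinearMap.adjoint (S s)) cstar) s)
    (hcb : (inner ℂ c b₂ : ℂ) ≠ 0)
    (t₁ : ℝ) (ht₁ : 0 < t₁) (w w' : ℝ → ℂ)
    (hw'int : IntervalIntegrable w' MeasureTheory.volume 0 t₁)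
    (hwAC : ∀ t ∈ Set.Icc 0 t₁, w t = ∫ s in (0:ℝ)..t, w' s)
    (hw'L2 : IntervalIntegrable (fun s => ‖w' s‖ ^ 2) MeasureTheory.volume 0 t₁) :
    ∃ u : ℝ → ℂ,
      IntervalIntegrable u MeasureTheory.volume 0 t₁ ∧
      IntervalIntegrable (fun s => ‖u s‖ ^ 2) MeasureTheory.volume 0 t₁ ∧
      ∀ t ∈ Set.Icc 0 t₁, w t = ∫ τ in (0:ℝ)..t, (inner ℂ c (S (t - τ) b₂) : ℂ) * u τ := by
  set k : ℝ → ℂ := fun s => (inner ℂ c (S s b₂) : ℂ) with hkdef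
  set k' : ℝ → ℂ := fun s => (inner ℂ ((ContinuousLinearMap.adjoint (S s)) cstar) b₂ : ℂ) with hk'def
  set k0 : ℂ := (inner ℂ c b₂ : ℂ) with hk0def
  have hk00 : k 0 = k0 := by
    rw [hkdef, hk0def]
    simp [hS0]
  -- derivative of the kernel
  have hk : ∀ s, HasDerivAt k (k' s) s := by
    intro s
    have h1 := HasDerivAt.inner ℂ (hc s) (hasDerivAt_const s b₂)
    simp only [inner_zero_right, zero_add, add_zero] at h1
    have h2 : (fun t : ℝ => (inner ℂ ((ContinuousLinearMap.adjoint (S t)) c) b₂ : ℂ)) = k := by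
      funext t
      rw [hkdef]
      exact ContinuousLinearMap.adjoint_inner_left (S t) b₂ c
    rw [h2] at h1
    exact h1
  have hk'meas : Measurable k' := by
    have h1 : k' = deriv k := funext fun s => ((hk s).deriv).symm
    rw [h1]
    exact measurable_deriv k
  have hkcont : Continuous k :=
    continuous_iff_continuousAt.mpr fun s => (hk s).continuousAt
  -- uniform bound for k' on [0, t₁] via Banach–Steinhaus
  obtain ⟨C, hC⟩ : ∃ C : ℝ, ∀ i : (Set.Icc (0:ℝ) t₁), ‖S i‖ ≤ C := by
    apply banach_steinhaus
    intro x
    obtain ⟨Cx, hCx⟩ := (isCompact_Icc (a := (0:ℝ)) (b := t₁)).exists_bound_of_continuousOn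
      ((hScont x).mono Set.Icc_subset_Ici_self)
    exact ⟨Cx, fun i => hCx i i.2⟩
  set M₂ : ℝ := C * ‖cstar‖ * ‖b₂‖ with hM₂def
  have hM₂ : ∀ s ∈ Set.Icc (0:ℝ) t₁, ‖k' s‖ ≤ M₂ := by
    intro s hs
    calc ‖k' s‖ ≤ ‖(ContinuousLinearMap.adjoint (S s)) cstar‖ * ‖b₂‖ := norm_inner_le_norm _ _
      _ ≤ (‖ContinuousLinearMap.adjoint (S s)‖ * ‖cstar‖) * ‖b₂‖ :=
        mul_le_mul_of_nonneg_right (ContinuousLinearMap.le_opNorm _ _) (norm_nonneg _)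
      _ = (‖S s‖ * ‖cstar‖) * ‖b₂‖ := by
        rw [ContinuousLinearMap.adjoint.norm_map (S s)]
      _ ≤ (C * ‖cstar‖) * ‖b₂‖ := by
        apply mul_le_mul_of_nonneg_right _ (norm_nonneg _)
        exact mul_le_mul_of_nonneg_right (hC ⟨s, hs⟩) (norm_nonneg _)
      _ = M₂ := by rw [hM₂def]
  have hM₂0 : 0 ≤ M₂ := le_trans (norm_nonneg _) (hM₂ 0 ⟨le_refl 0, ht₁.le⟩)
  have hk0norm : (0:ℝ) < ‖k0‖ := norm_pos_iff.mpr hcb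
  -- the data for the fixed point lemma
  set g : ℝ → ℂ := (Set.Icc (0:ℝ) t₁).indicator (fun s => k' s / k0) with hgdef
  have hg : Measurable g := (hk'meas.div_const k0).indicator measurableSet_Icc
  set M : ℝ := M₂ / ‖k0‖ with hMdef
  have hgb : ∀ x, ‖g x‖ ≤ M := by
    intro x
    rw [hgdef]
    by_cases hx : x ∈ Set.Icc (0:ℝ) t₁
    · rw [Set.indicator_of_mem hx, norm_div]
      exact (div_le_div_iff_of_pos_right hk0norm).mpr (hM₂ x hx)
    · rw [Set.indicator_of_notMem hx, norm_zero]
      positivity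
  have hgsupp : ∀ x : ℝ, x < 0 → g x = 0 := by
    intro x hx
    rw [hgdef]
    exact Set.indicator_of_notMem (fun hc => absurd hc.1 (not_le.mpr hx)) _
  set h₀ : ℝ → ℂ := (Set.Icc (0:ℝ) t₁).indicator (fun τ => w' τ / k0) with hh₀def
  have hw'Icc : IntegrableOn w' (Set.Icc (0:ℝ) t₁) volume :=
    (integrableOn_Icc_iff_integrableOn_Ioc).mpr hw'int.1
  have hh₀ : Integrable h₀ volume :=
    MeasureTheory.IntegrableOn.integrable_indicator (hw'Icc.div_const k0) measurableSet_Icc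
  obtain ⟨v, hvcont, ⟨B, hvB⟩, hvfix⟩ := volterra_fixed t₁ ht₁ g hg M hgb hgsupp h₀ hh₀
  -- the control
  set u : ℝ → ℂ := fun τ => w' τ / k0 + v τ with hudef
  have huint : IntervalIntegrable u volume 0 t₁ :=
    (hw'int.div_const k0).add (hvcont.intervalIntegrable 0 t₁)
  have huaesm : AEStronglyMeasurable u (volume.restrict (Set.Ioc (0:ℝ) t₁)) :=
    huint.1.aestronglyMeasurable
  have huL2 : IntervalIntegrable (fun s => ‖u s‖ ^ 2) volume 0 t₁ := by
    have hG : IntervalIntegrable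
        (fun s => 2 / ‖k0‖ ^ 2 * ‖w' s‖ ^ 2 + 2 * B ^ 2) volume 0 t₁ :=
      (hw'L2.const_mul _).add (_root_.intervalIntegrable_const)
    apply IntervalIntegrable.mono_fun hG
    · rw [Set.uIoc_of_le ht₁.le]
      exact (continuous_pow 2).comp_aestronglyMeasurable huaesm.norm
    · apply Filter.Eventually.of_forall
      intro s
      have hB0 : 0 ≤ B := le_trans (norm_nonneg _) (hvB 0)
      have h1 : ‖u s‖ ≤ ‖w' s‖ / ‖k0‖ + B := by
        rw [hudef]
        calc ‖w' s / k0 + v s‖ ≤ ‖w' s / k0‖ + ‖v s‖ := norm_add_le _ _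
          _ ≤ ‖w' s‖ / ‖k0‖ + B := by
            rw [norm_div]
            exact add_le_add le_rfl (hvB s)
      have h2 : ‖u s‖ ^ 2 ≤ (‖w' s‖ / ‖k0‖ + B) ^ 2 :=
        pow_le_pow_left₀ (norm_nonneg _) h1 2
      have h3 : (‖w' s‖ / ‖k0‖ + B) ^ 2 ≤ 2 / ‖k0‖ ^ 2 * ‖w' s‖ ^ 2 + 2 * B ^ 2 := by
        have h4 : (‖w' s‖ / ‖k0‖ + B) ^ 2 ≤ 2 * (‖w' s‖ / ‖k0‖) ^ 2 + 2 * B ^ 2 := by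
          nlinarith [sq_nonneg (‖w' s‖ / ‖k0‖ - B)]
        calc (‖w' s‖ / ‖k0‖ + B) ^ 2 ≤ 2 * (‖w' s‖ / ‖k0‖) ^ 2 + 2 * B ^ 2 := h4
          _ = 2 / ‖k0‖ ^ 2 * ‖w' s‖ ^ 2 + 2 * B ^ 2 := by
            rw [div_pow]
            ring
      calc ‖‖u s‖ ^ 2‖ = ‖u s‖ ^ 2 := by
            rw [Real.norm_of_nonneg (by positivity)]
        _ ≤ 2 / ‖k0‖ ^ 2 * ‖w' s‖ ^ 2 + 2 * B ^ 2 := le_trans h2 h3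
        _ ≤ ‖2 / ‖k0‖ ^ 2 * ‖w' s‖ ^ 2 + 2 * B ^ 2‖ := le_abs_self _
  -- the pointwise second-kind equation
  have hu_eq : ∀ t ∈ Set.Icc (0:ℝ) t₁,
      (∫ τ in (0:ℝ)..t, k' (t - τ) * u τ) = w' t - k0 * u t := by
    intro t ht
    have e1 : (∫ τ in (0:ℝ)..t, k' (t - τ) * u τ) =
        ∫ τ, (Set.Icc (0:ℝ) t).indicator (fun τ => k' (t - τ) * u τ) τ := by
      rw [intervalIntegral.integral_of_le ht.1, ← MeasureTheory.integral_Icc_eq_integral_Ioc,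
        ← MeasureTheory.integral_indicator measurableSet_Icc]
    have e2 : ∀ τ, (Set.Icc (0:ℝ) t).indicator (fun τ => k' (t - τ) * u τ) τ =
        k0 * ((h₀ τ + (Set.Icc 0 t₁).indicator v τ) * g (t - τ)) := by
      intro τ
      by_cases hτ : τ ∈ Set.Icc (0:ℝ) t
      · have hτI : τ ∈ Set.Icc (0:ℝ) t₁ := ⟨hτ.1, le_trans hτ.2 ht.2⟩
        have htτI : t - τ ∈ Set.Icc (0:ℝ) t₁ := ⟨by linarith [hτ.2], by linarith [ht.2, hτ.1]⟩
        rw [Set.indicator_of_mem hτ, hh₀def, hgdef, Set.indicator_of_mem hτI,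
          Set.indicator_of_mem hτI, Set.indicator_of_mem htτI, hudef]
        field_simp
      · rw [Set.indicator_of_notMem hτ]
        rw [Set.mem_Icc, not_and_or, not_le, not_le] at hτ
        rcases hτ with h | h
        · have hτI : τ ∉ Set.Icc (0:ℝ) t₁ := by
            rw [Set.mem_Icc]; push_neg; intro h0; linarith
          rw [hh₀def, Set.indicator_of_notMem hτI, Set.indicator_of_notMem hτI]
          simp
        · have htτI : t - τ ∉ Set.Icc (0:ℝ) t₁ := by
            rw [Set.mem_Icc]; push_neg; intro h0; linarith
          rw [hgdef, Set.indicator_of_notMem htτI]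
          simp
    have e3 : (∫ τ, k0 * ((h₀ τ + (Set.Icc 0 t₁).indicator v τ) * g (t - τ))) =
        k0 * ∫ τ, (h₀ τ + (Set.Icc 0 t₁).indicator v τ) * g (t - τ) :=
      integral_const_mul _ _
    rw [e1, funext e2, e3, ← neg_neg (∫ τ, (h₀ τ + (Set.Icc 0 t₁).indicator v τ) * g (t - τ)),
      ← hvfix t]
    rw [hudef]
    field_simp
    ring
  -- assemble the answer
  refine ⟨u, huint, huL2, fun t ht => ?_⟩
  have ht0 : (0:ℝ) ≤ t := ht.1
  have htt : t ≤ t₁ := ht.2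
  have huIcc : Set.uIcc (0:ℝ) t ⊆ Set.uIcc (0:ℝ) t₁ := by
    rw [Set.uIcc_of_le ht0, Set.uIcc_of_le ht₁.le]
    exact Set.Icc_subset_Icc le_rfl htt
  have hII_u : IntervalIntegrable u volume 0 t := huint.mono_set huIcc
  have hII_w' : IntervalIntegrable w' volume 0 t := hw'int.mono_set huIcc
  have hIIA : IntervalIntegrable (fun τ => k (t - τ) * u τ) volume 0 t :=
    hII_u.continuousOn_mul ((hkcont.comp (continuous_const.sub continuous_id)).continuousOn)
  have hIIB : IntervalIntegrable (fun τ => k0 * u τ) volume 0 t := by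
    simpa [mul_comm] using hII_u.continuousOn_mul (continuousOn_const (c := k0))
  have e3 : (∫ τ in (0:ℝ)..t, (k (t - τ) - k 0) * u τ) =
      (∫ τ in (0:ℝ)..t, k (t - τ) * u τ) - ∫ τ in (0:ℝ)..t, k 0 * u τ := by
    rw [← intervalIntegral.integral_sub hIIA (by rwa [hk00])]
    apply intervalIntegral.integral_congr
    intro τ _
    ring
  have e4 : (∫ s in (0:ℝ)..t, (∫ τ in (0:ℝ)..s, k' (s - τ) * u τ)) =
      ∫ τ in (0:ℝ)..t, (k (t - τ) - k 0) * u τ :=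
    fubini_step k k' hk hk'meas t₁ M₂ hM₂ u huint.1 t ht0 htt
  have e5 : (∫ s in (0:ℝ)..t, (∫ τ in (0:ℝ)..s, k' (s - τ) * u τ)) =
      ∫ s in (0:ℝ)..t, (w' s - k0 * u s) := by
    apply intervalIntegral.integral_congr
    intro s hs
    rw [Set.uIcc_of_le ht0] at hs
    exact hu_eq s ⟨hs.1, le_trans hs.2 htt⟩
  have e6 : (∫ s in (0:ℝ)..t, (w' s - k0 * u s)) =
      (∫ s in (0:ℝ)..t, w' s) - ∫ s in (0:ℝ)..t, k0 * u s :=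
    intervalIntegral.integral_sub hII_w' hIIB
  have key : (∫ τ in (0:ℝ)..t, k (t - τ) * u τ) = ∫ s in (0:ℝ)..t, w' s := by
    have h7 : (∫ τ in (0:ℝ)..t, (k (t - τ) - k 0) * u τ) =
        (∫ s in (0:ℝ)..t, w' s) - ∫ s in (0:ℝ)..t, k0 * u s := by
      rw [← e4, e5, e6]
    rw [h7, hk00] at e3
    linear_combination -e3
  rw [hwAC t ht]
  exact key.symm
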